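/- Let d ≥ 2, let α ∈ (0,∞)^d, N ∈ ℕ, and let r, s ∈ ℕ^d with |r| = |s| = N. Then for every m ∈ ℕ one has ∫∫ ξ^α_m(x,y) D_{α+r}(dx) D_{α+s}(dy) = ξ^{H,α}_m(r,s); consequently, for every 0 ≤ n ≤ N the Hahn polynomial kernel satisfies H^α_n(r,s) = ((|α|+N)_(n)/N_[n]) ∫∫ Q^α_n(x,y) D_{α+r}(dx) D_{α+s}(dy). -/

import Mathlib

open MeasureTheory Finset

noncomputable section

/-- Rising factorial `(a)_(n) = a (a+1) ⋯ (a+n−1)`. -/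
def rf (a : ℝ) : ℕ → ℝ
  | 0 => 1
  | n + 1 => rf a n * (a + n)

/-- Falling factorial `N_[n] = N (N−1) ⋯ (N−n+1)` of a natural number, as a real. -/
def ff (N n : ℕ) : ℝ := (N.descFactorial n : ℝ)

/-- Triangular array `a^θ_{n,m}` (meaningful for `0 ≤ m ≤ n`). -/
def acoef (θ : ℝ) (n m : ℕ) : ℝ :=
  if n = 0 then 1
  else (θ + 2 * n - 1) * (-1 : ℝ) ^ (n - m) * rf (θ + m) (n - 1) /
    ((m.factorial : ℝ) * ((n - m).factorial : ℝ))

/-- The simplex `Δ_{d−1} = {x ∈ [0,1]^d : x₁ + ⋯ + x_d = 1}`. -/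
def simplex (d : ℕ) : Set (Fin d → ℝ) :=
  {x | (∀ i, 0 ≤ x i ∧ x i ≤ 1) ∧ ∑ i, x i = 1}

/-- `ξ^α_m(x,y)`. -/
def xiK {d : ℕ} (α : Fin d → ℝ) (m : ℕ) (x y : Fin d → ℝ) : ℝ :=
  ∑ l ∈ Finset.Nat.antidiagonalTuple d m,
    ((m.factorial : ℝ) / ∏ i, ((l i).factorial : ℝ)) *
      (rf (∑ i, α i) m / ∏ i, rf (α i) (l i)) * ∏ i, (x i * y i) ^ l i

/-- Jacobi polynomial kernel `Q^α_n(x,y)`. -/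
def Qker {d : ℕ} (α : Fin d → ℝ) (n : ℕ) (x y : Fin d → ℝ) : ℝ :=
  ∑ m ∈ Finset.range (n + 1), acoef (∑ i, α i) n m * xiK α m x y

/-- Dirichlet–multinomial pmf `DM_α(l; m)`. -/
def DM {d : ℕ} (α : Fin d → ℝ) (l : Fin d → ℕ) (m : ℕ) : ℝ :=
  ((m.factorial : ℝ) / ∏ i, ((l i).factorial : ℝ)) *
    (∏ i, rf (α i) (l i)) / rf (∑ i, α i) m

/-- `ξ^{H,α}_m(r,s)`. -/
def xiH {d : ℕ} (α : Fin d → ℝ) (m : ℕ) (r s : Fin d → ℕ) : ℝ :=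
  ∑ l ∈ Finset.Nat.antidiagonalTuple d m,
    DM (fun i => α i + r i) l m * DM (fun i => α i + s i) l m / DM α l m

/-- Hahn polynomial kernel `H^α_n(r,s)` for `|r| = |s| = N`. -/
def Hker {d : ℕ} (α : Fin d → ℝ) (N n : ℕ) (r s : Fin d → ℕ) : ℝ :=
  (rf ((∑ i, α i) + N) n / ff N n) *
    ∑ m ∈ Finset.range (n + 1), acoef (∑ i, α i) n m * xiH α m r s

/-- `χ^{H,α}_m(r,s)`. -/
def chiH {d : ℕ} (α : Fin d → ℝ) (N m : ℕ) (r s : Fin d → ℕ) : ℝ :=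
  ∑ l ∈ Finset.Nat.antidiagonalTuple d m,
    (1 / DM α l m) *
      (((m.factorial : ℝ) / ∏ i, ((l i).factorial : ℝ)) * (∏ i, ff (r i) (l i)) / ff N m) *
      (((m.factorial : ℝ) / ∏ i, ((l i).factorial : ℝ)) * (∏ i, ff (s i) (l i)) / ff N m)

/-- Normalized Jacobi polynomial `R_n^{a,b}` on `[0,1]`. -/
def Rpoly (a b : ℝ) (n : ℕ) (x : ℝ) : ℝ :=
  ∑ k ∈ Finset.range (n + 1),
    (-1 : ℝ) ^ k * (n.choose k : ℝ) * (rf ((n : ℝ) + (a + b) - 1) k / rf b k) * (1 - x) ^ k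

/-- `ζ_n^{a,b}`. -/
def zeta (a b : ℝ) (n : ℕ) : ℝ :=
  if n = 0 then 1
  else ((a + b) + 2 * n - 1) * rf (a + b) (n - 1) * rf b n / ((n.factorial : ℝ) * rf a n)

/-- Hahn polynomial `h_n^{a,b}(r; N)`. -/
def hahnPoly (a b : ℝ) (N n r : ℕ) : ℝ :=
  ∑ k ∈ Finset.range (n + 1),
    (-1 : ℝ) ^ k * (n.choose k : ℝ) * rf ((n : ℝ) + (a + b) - 1) k * ff r k /
      (rf a k * ff N k)

/-- `u^{a,b}_{N,n}`. -/
def uCoef (a b : ℝ) (N n : ℕ) : ℝ :=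
  if n = 0 then 1
  else (N.choose n : ℝ) * ((a + b) + 2 * n - 1) * rf (a + b) (n - 1) * rf a n /
    (rf ((a + b) + N) n * rf b n)

/-- Beta function `B(a,b) = Γ(a)Γ(b)/Γ(a+b)`. -/
def BetaFn (a b : ℝ) : ℝ := Real.Gamma a * Real.Gamma b / Real.Gamma (a + b)

/-- Condition (G) on the parameter vector `α`. -/
def CondG {d : ℕ} (α : Fin d → ℝ) : Prop :=
  ∀ j : Fin d, 0 < (j : ℕ) →
    (α j ≤ ∑ i ∈ Finset.univ.filter fun i : Fin d => (i : ℕ) < (j : ℕ), α i) ∧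
      (1 / 2 ≤ α j ∨ 2 ≤ ∑ i ∈ Finset.univ.filter fun i : Fin d => (i : ℕ) ≤ (j : ℕ), α i)

/-- Density of the Dirichlet distribution in the coordinates `(u₁, …, u_{d−1})`. -/
def dirichletDensity (k : ℕ) (α : Fin (k + 1) → ℝ) (u : Fin k → ℝ) : ℝ :=
  if (∀ i, 0 < u i ∧ u i < 1) ∧ ∑ i, u i < 1 then
    (Real.Gamma (∑ i, α i) / ∏ i, Real.Gamma (α i)) *
      (∏ i : Fin k, u i ^ (α (Fin.castSucc i) - 1)) * (1 - ∑ i, u i) ^ (α (Fin.last k) - 1)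
  else 0

/-- The Dirichlet probability measure `D_α` on `Δ_{d−1} ⊆ ℝ^d`, `d = k + 1`. -/
def dirichlet (k : ℕ) (α : Fin (k + 1) → ℝ) : Measure (Fin (k + 1) → ℝ) :=
  ((volume : Measure (Fin k → ℝ)).withDensity fun u =>
      ENNReal.ofReal (dirichletDensity k α u)).map fun u => Fin.snoc u (1 - ∑ i, u i)


/-! ### Auxiliary lemmas -/

lemma rf_pos {a : ℝ} (ha : 0 < a) : ∀ n, 0 < rf a n
  | 0 => one_pos
  | n + 1 => mul_pos (rf_pos ha n) (by positivity)

lemma Gamma_add_nat {a : ℝ} (ha : 0 < a) : ∀ n : ℕ, Real.Gamma (a + n) = rf a n * Real.Gamma a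
  | 0 => by simp [rf]
  | n + 1 => by
    have h : a + (n + 1 : ℕ) = (a + n) + 1 := by push_cast; ring
    rw [h, Real.Gamma_add_one (by positivity), Gamma_add_nat ha n, rf]
    ring

lemma beta_ioo {a b S : ℝ} (ha : 0 < a) (hb : 0 < b) (hS : 0 < S) :
    IntegrableOn (fun t => t ^ (a-1) * (S - t) ^ (b-1)) (Set.Ioc 0 S) ∧
    ∫ t in Set.Ioc 0 S, t ^ (a-1) * (S - t) ^ (b-1)
      = S ^ (a+b-1) * (Real.Gamma a * Real.Gamma b / Real.Gamma (a+b)) := by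
  have hGa := Real.Gamma_pos_of_pos ha
  have hGb := Real.Gamma_pos_of_pos hb
  have hGab := Real.Gamma_pos_of_pos (by positivity : (0:ℝ) < a + b)
  set F : ℝ → ℂ := fun t => (t : ℂ) ^ ((a:ℂ) - 1) * ((S : ℂ) - t) ^ ((b:ℂ) - 1) with hF
  have hbeta : Complex.betaIntegral a b =
      ((Real.Gamma a * Real.Gamma b / Real.Gamma (a+b) : ℝ) : ℂ) := by
    have h := Complex.Gamma_mul_Gamma_eq_betaIntegral
      (s := (a:ℂ)) (t := (b:ℂ)) (by simpa using ha) (by simpa using hb)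
    have hab : (a:ℂ) + b = ((a+b : ℝ) : ℂ) := by push_cast; ring
    rw [hab, Complex.Gamma_ofReal, Complex.Gamma_ofReal, Complex.Gamma_ofReal] at h
    rw [Complex.ofReal_div, Complex.ofReal_mul,
      eq_div_iff (by exact_mod_cast hGab.ne' : ((Real.Gamma (a+b):ℝ):ℂ) ≠ 0), mul_comm]
    exact h.symm
  have hval : ∫ t in (0:ℝ)..S, F t = (S:ℂ) ^ ((a:ℂ) + b - 1) * Complex.betaIntegral a b :=
    Complex.betaIntegral_scaled a b hS
  have hvr : (S:ℂ) ^ ((a:ℂ) + b - 1) = ((S ^ (a+b-1) : ℝ) : ℂ) := by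
    rw [Complex.ofReal_cpow hS.le]; push_cast; ring_nf
  have hne : (∫ t in (0:ℝ)..S, F t) ≠ 0 := by
    rw [hval, hvr, hbeta]
    simp only [← Complex.ofReal_mul, ne_eq, Complex.ofReal_eq_zero]
    positivity
  have hII : IntervalIntegrable F volume 0 S := by
    by_contra h
    exact hne (intervalIntegral.integral_undef h)
  have hIoc : IntegrableOn F (Set.Ioc 0 S) :=
    (intervalIntegrable_iff_integrableOn_Ioc_of_le hS.le).mp hII
  have heq : ∀ t ∈ Set.Ioc (0:ℝ) S, F t = ((t ^ (a-1) * (S - t) ^ (b-1) : ℝ) : ℂ) := by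
    intro t ht
    rw [hF]
    simp only
    rw [Complex.ofReal_mul, Complex.ofReal_cpow ht.1.le,
      Complex.ofReal_cpow (by linarith [ht.2] : (0:ℝ) ≤ S - t),
      Complex.ofReal_sub a 1, Complex.ofReal_sub b 1, Complex.ofReal_sub S t,
      Complex.ofReal_one]
  have haeeq : (fun t => t ^ (a-1) * (S - t) ^ (b-1)) =ᵐ[volume.restrict (Set.Ioc 0 S)]
      (fun t => (F t).re) := by
    rw [Filter.EventuallyEq, ae_restrict_iff' measurableSet_Ioc]
    filter_upwards with t ht
    rw [heq t ht, Complex.ofReal_re]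
  constructor
  · exact (Integrable.re hIoc).congr haeeq.symm
  · calc ∫ t in Set.Ioc 0 S, t ^ (a-1) * (S - t) ^ (b-1)
        = ∫ t in Set.Ioc 0 S, (F t).re := integral_congr_ae haeeq
      _ = (∫ t in Set.Ioc 0 S, F t).re := by simpa using integral_re hIoc
      _ = _ := by
          rw [← intervalIntegral.integral_of_le hS.le, hval, hvr, hbeta,
            ← Complex.ofReal_mul, Complex.ofReal_re]

lemma cond_iff {k : ℕ} (u : Fin k → ℝ) :
    ((∀ i, 0 < u i ∧ u i < 1) ∧ ∑ i, u i < 1) ↔ ((∀ i, 0 < u i) ∧ ∑ i, u i < 1) := by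
  constructor
  · exact fun h => ⟨fun i => (h.1 i).1, h.2⟩
  · rintro ⟨h1, h2⟩
    refine ⟨fun i => ⟨h1 i, ?_⟩, h2⟩
    calc u i ≤ ∑ j, u j :=
          Finset.single_le_sum (fun j _ => (h1 j).le) (Finset.mem_univ i)
      _ < 1 := h2

lemma measurable_dd (k : ℕ) (α : Fin (k + 1) → ℝ) : Measurable (dirichletDensity k α) := by
  unfold dirichletDensity
  have hs : MeasurableSet {u : Fin k → ℝ | (∀ i, 0 < u i ∧ u i < 1) ∧ ∑ i, u i < 1} := by
    have h1 : MeasurableSet {u : Fin k → ℝ | ∀ i, 0 < u i ∧ u i < 1} := by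
      rw [Set.setOf_forall]
      exact MeasurableSet.iInter fun i => (measurable_pi_apply i) measurableSet_Ioo
    have h2 : MeasurableSet {u : Fin k → ℝ | ∑ i, u i < 1} :=
      (Finset.univ.measurable_sum fun i _ => measurable_pi_apply i) measurableSet_Iio
    exact h1.inter h2
  refine Measurable.ite hs ?_ measurable_const
  refine Measurable.mul (Measurable.mul measurable_const ?_) ?_
  · exact Finset.univ.measurable_prod fun i _ => (measurable_pi_apply i).pow measurable_const
  · exact ((measurable_const.sub (Finset.univ.measurable_sum fun i _ =>
      measurable_pi_apply i))).pow measurable_const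

lemma dd_nonneg {k : ℕ} {α : Fin (k + 1) → ℝ} (hα : ∀ i, 0 < α i) (u : Fin k → ℝ) :
    0 ≤ dirichletDensity k α u := by
  unfold dirichletDensity
  split_ifs with h
  · have h1 : (0:ℝ) < Real.Gamma (∑ i, α i) := Real.Gamma_pos_of_pos (by
      exact Finset.sum_pos (fun i _ => hα i) ⟨0, Finset.mem_univ _⟩)
    have h2 : (0:ℝ) < ∏ i, Real.Gamma (α i) :=
      Finset.prod_pos fun i _ => Real.Gamma_pos_of_pos (hα i)
    have h3 : (0:ℝ) ≤ ∏ i : Fin k, u i ^ (α (Fin.castSucc i) - 1) :=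
      Finset.prod_nonneg fun i _ => Real.rpow_nonneg (h.1 i).1.le _
    have h4 : (0:ℝ) ≤ (1 - ∑ i, u i) ^ (α (Fin.last k) - 1) :=
      Real.rpow_nonneg (by linarith [h.2]) _
    positivity
  · exact le_refl 0

lemma snoc_sum {k : ℕ} (v : Fin k → ℝ) (t : ℝ) :
    ∑ i : Fin (k+1), Fin.snoc v t i = (∑ j, v j) + t := by
  simp [Fin.sum_univ_castSucc]

lemma dd_lintegral : ∀ (k : ℕ) (α : Fin (k+1) → ℝ), (∀ i, 0 < α i) →
    ∫⁻ u, ENNReal.ofReal (dirichletDensity k α u) = 1 := by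
  intro k
  induction k with
  | zero =>
    intro α hα
    have h1 : ∀ u : Fin 0 → ℝ, dirichletDensity 0 α u = 1 := by
      intro u
      rw [dirichletDensity, if_pos ⟨fun i => i.elim0, by simp⟩]
      simp [(Real.Gamma_pos_of_pos (hα 0)).ne']
    simp only [h1, ENNReal.ofReal_one]
    rw [lintegral_one, volume_pi, Measure.pi_univ]
    simp
  | succ k ih =>
    intro α hα
    set A : Fin k → ℝ := fun j => α j.castSucc.castSucc with hA
    set a : ℝ := α ((Fin.last k).castSucc) with ha'
    set b : ℝ := α (Fin.last (k+1)) with hb'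
    have hapos : 0 < a := hα _
    have hbpos : 0 < b := hα _
    set α' : Fin (k+1) → ℝ := Fin.snoc A (a + b) with hα'def
    have hα' : ∀ i, 0 < α' i := by
      intro i
      induction i using Fin.lastCases with
      | last => rw [hα'def]; simp only [Fin.snoc_last]; positivity
      | cast j => rw [hα'def]; simp only [Fin.snoc_castSucc]; exact hα _
    have hsum' : ∑ i, α' i = ∑ i, α i := by
      rw [hα'def]
      simp [Fin.sum_univ_castSucc, hA]
      ring
    have hprodΓ : ∏ i, Real.Gamma (α i) =
        (∏ j, Real.Gamma (A j)) * Real.Gamma a * Real.Gamma b := by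
      rw [Fin.prod_univ_castSucc (fun i : Fin (k+1+1) => Real.Gamma (α i)),
        Fin.prod_univ_castSucc (fun i : Fin (k+1) => Real.Gamma (α i.castSucc))]
    have hprodΓ' : ∏ i, Real.Gamma (α' i) =
        (∏ j, Real.Gamma (A j)) * Real.Gamma (a + b) := by
      rw [hα'def]
      simp [Fin.prod_univ_castSucc]
    set C : ℝ := Real.Gamma (∑ i, α i) / ∏ i, Real.Gamma (α i) with hC
    have claim : ∀ v : Fin k → ℝ,
        (∫⁻ t, ENNReal.ofReal (dirichletDensity (k+1) α (Fin.snoc v t)))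
          = ENNReal.ofReal (dirichletDensity k α' v) := by
      intro v
      by_cases hv : (∀ j, 0 < v j) ∧ ∑ j, v j < 1
      · obtain ⟨hv1, hv2⟩ := hv
        set S : ℝ := 1 - ∑ j, v j with hSdef
        have hS : 0 < S := by rw [hSdef]; linarith
        set P : ℝ := ∏ j, v j ^ (A j - 1) with hP
        have hPpos : 0 < P := Finset.prod_pos fun j _ => Real.rpow_pos_of_pos (hv1 j) _
        have hCpos : 0 < C := by
          rw [hC]
          have := Real.Gamma_pos_of_pos (Finset.sum_pos (fun i _ => hα i) ⟨0, Finset.mem_univ _⟩)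
          have h2 : (0:ℝ) < ∏ i, Real.Gamma (α i) :=
            Finset.prod_pos fun i _ => Real.Gamma_pos_of_pos (hα i)
          positivity
        have hpt : ∀ t : ℝ, ENNReal.ofReal (dirichletDensity (k+1) α (Fin.snoc v t)) =
            Set.indicator (Set.Ioo 0 S)
              (fun t => ENNReal.ofReal ((C * P) * (t ^ (a-1) * (S - t) ^ (b-1)))) t := by
          intro t
          by_cases ht : t ∈ Set.Ioo 0 S
          · rw [Set.indicator_of_mem ht]
            obtain ⟨ht1, ht2⟩ := ht
            rw [dirichletDensity, if_pos]
            · have h1 : 1 - ((∑ j, v j) + t) = S - t := by rw [hSdef]; ring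
              rw [snoc_sum, h1]
              simp only [hP, hC, hA, ha', hb']
              simp only [Fin.prod_univ_castSucc, Fin.snoc_castSucc, Fin.snoc_last]
              congr 1
              have hprodv : (∏ x : Fin k, v x ^ (α x.castSucc.castSucc - 1))
                  = ∏ x : Fin k, v x ^ (-1 + α x.castSucc.castSucc) :=
                Finset.prod_congr rfl (fun x _ => by ring_nf)
              ring_nf
            · rw [cond_iff]
              refine ⟨fun i => ?_, ?_⟩
              · induction i using Fin.lastCases with
                | last => simpa [Fin.snoc_last] using ht1
                | cast j => simpa [Fin.snoc_castSucc] using hv1 j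

              · rw [snoc_sum]
                rw [hSdef] at ht2
                linarith
          · rw [Set.indicator_of_notMem ht, dirichletDensity, if_neg, ENNReal.ofReal_zero]
            intro hcond
            rw [cond_iff] at hcond
            apply ht
            obtain ⟨h1, h2⟩ := hcond
            have h0t : 0 < t := by simpa [Fin.snoc_last] using h1 (Fin.last k)
            rw [snoc_sum] at h2
            constructor
            · exact h0t
            · rw [hSdef]; linarith
        calc (∫⁻ t, ENNReal.ofReal (dirichletDensity (k+1) α (Fin.snoc v t)))
            = ∫⁻ t, Set.indicator (Set.Ioo 0 S)
              (fun t => ENNReal.ofReal ((C * P) * (t ^ (a-1) * (S - t) ^ (b-1)))) t :=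
              lintegral_congr hpt
          _ = ∫⁻ t in Set.Ioo 0 S,
              ENNReal.ofReal ((C * P) * (t ^ (a-1) * (S - t) ^ (b-1))) :=
              lintegral_indicator measurableSet_Ioo _
          _ = ∫⁻ t in Set.Ioc 0 S,
              ENNReal.ofReal ((C * P) * (t ^ (a-1) * (S - t) ^ (b-1))) := by
              rw [Measure.restrict_congr_set Ioo_ae_eq_Ioc]
          _ = ENNReal.ofReal (∫ t in Set.Ioc 0 S, (C * P) * (t ^ (a-1) * (S - t) ^ (b-1))) := by
              refine (ofReal_integral_eq_lintegral_ofReal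
                (((beta_ioo hapos hbpos hS).1).const_mul _) ?_).symm
              filter_upwards [ae_restrict_mem measurableSet_Ioc] with t ht
              have h1 : (0:ℝ) ≤ t ^ (a-1) := Real.rpow_nonneg ht.1.le _
              have h2 : (0:ℝ) ≤ (S - t) ^ (b-1) := Real.rpow_nonneg (by linarith [ht.2]) _
              positivity
          _ = ENNReal.ofReal (dirichletDensity k α' v) := by
              rw [integral_const_mul, (beta_ioo hapos hbpos hS).2]
              congr 1
              rw [dirichletDensity, if_pos ((cond_iff v).mpr ⟨hv1, hv2⟩)]
              have hl : α' (Fin.last k) = a + b := by rw [hα'def]; simp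
              have hcs : ∀ j : Fin k, α' j.castSucc = A j := by
                intro j; rw [hα'def]; simp
              simp only [hsum', hcs, hl, ← hSdef, ← hP, ← hC]
              have hGab : 0 < Real.Gamma (a+b) := Real.Gamma_pos_of_pos (by positivity)
              have hGA : 0 < ∏ j, Real.Gamma (A j) :=
                Finset.prod_pos fun j _ => Real.Gamma_pos_of_pos (hα _)
              rw [hprodΓ', hC, hprodΓ]
              field_simp
      · have hzero : ∀ t : ℝ, dirichletDensity (k+1) α (Fin.snoc v t) = 0 := by
          intro t
          rw [dirichletDensity, if_neg]
          intro hcond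
          rw [cond_iff] at hcond
          obtain ⟨h1, h2⟩ := hcond
          apply hv
          refine ⟨fun j => by simpa [Fin.snoc_castSucc] using h1 j.castSucc, ?_⟩
          have h0t : 0 < t := by simpa [Fin.snoc_last] using h1 (Fin.last k)
          rw [snoc_sum] at h2
          linarith
        have hzero' : dirichletDensity k α' v = 0 := by
          rw [dirichletDensity, if_neg]
          intro hcond
          rw [cond_iff] at hcond
          exact hv hcond
        simp [hzero, hzero']
    have hmeas : Measurable fun u : Fin (k+1) → ℝ =>
        ENNReal.ofReal (dirichletDensity (k+1) α u) :=
      (measurable_dd _ _).ennreal_ofReal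
    set e := MeasurableEquiv.piFinSuccAbove (fun _ : Fin (k+1) => ℝ) (Fin.last k) with he
    have hesymm : ∀ p : ℝ × (Fin k → ℝ), e.symm p = Fin.snoc p.2 p.1 := by
      intro p
      rw [he]
      simp [MeasurableEquiv.piFinSuccAbove_symm_apply, Fin.insertNthEquiv, Fin.insertNth_last']
    calc ∫⁻ u, ENNReal.ofReal (dirichletDensity (k+1) α u)
        = ∫⁻ p : ℝ × (Fin k → ℝ), ENNReal.ofReal (dirichletDensity (k+1) α (e.symm p))
            ∂((volume : Measure ℝ).prod (volume : Measure (Fin k → ℝ))) :=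
          (((volume_preserving_piFinSuccAbove (fun _ : Fin (k+1) => ℝ)
            (Fin.last k)).symm _).lintegral_comp hmeas).symm
      _ = ∫⁻ v, ∫⁻ t, ENNReal.ofReal (dirichletDensity (k+1) α (e.symm (t, v))) := by
          exact lintegral_prod_symm' _ (hmeas.comp e.symm.measurable)
      _ = ∫⁻ v, ENNReal.ofReal (dirichletDensity k α' v) := by
          apply lintegral_congr
          intro v
          calc ∫⁻ t, ENNReal.ofReal (dirichletDensity (k+1) α (e.symm (t, v)))
              = ∫⁻ t, ENNReal.ofReal (dirichletDensity (k+1) α (Fin.snoc v t)) := by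
                apply lintegral_congr
                intro t
                rw [hesymm (t, v)]
            _ = _ := claim v
      _ = 1 := ih α' hα'

lemma sum_pos' {k : ℕ} {β : Fin (k+1) → ℝ} (hβ : ∀ i, 0 < β i) : 0 < ∑ i, β i :=
  Finset.sum_pos (fun i _ => hβ i) ⟨0, Finset.mem_univ _⟩

lemma dd_integrable (k : ℕ) (β : Fin (k+1) → ℝ) (hβ : ∀ i, 0 < β i) :
    Integrable (dirichletDensity k β) := by
  refine ⟨(measurable_dd k β).aestronglyMeasurable, ?_⟩
  rw [hasFiniteIntegral_iff_ofReal (ae_of_all _ (dd_nonneg hβ)), dd_lintegral k β hβ]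
  exact ENNReal.one_lt_top

lemma dd_integral_one (k : ℕ) (β : Fin (k+1) → ℝ) (hβ : ∀ i, 0 < β i) :
    ∫ u, dirichletDensity k β u = 1 := by
  rw [integral_eq_lintegral_of_nonneg_ae (ae_of_all _ (dd_nonneg hβ))
    (measurable_dd k β).aestronglyMeasurable, dd_lintegral k β hβ]
  simp

def snocFun (k : ℕ) : (Fin k → ℝ) → (Fin (k+1) → ℝ) := fun u => Fin.snoc u (1 - ∑ i, u i)

lemma measurable_snocFun (k : ℕ) : Measurable (snocFun k) := by
  apply measurable_pi_lambda
  intro i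
  induction i using Fin.lastCases with
  | last =>
    have : (fun u : Fin k → ℝ => snocFun k u (Fin.last k)) = fun u => 1 - ∑ i, u i := by
      funext u; simp [snocFun]
    rw [this]
    exact measurable_const.sub (Finset.univ.measurable_sum fun j _ => measurable_pi_apply j)
  | cast j =>
    have : (fun u : Fin k → ℝ => snocFun k u (Fin.castSucc j)) = fun u => u j := by
      funext u; simp [snocFun]
    rw [this]
    exact measurable_pi_apply j

lemma dd_mul_mono (k : ℕ) (β : Fin (k+1) → ℝ) (hβ : ∀ i, 0 < β i) (l : Fin (k+1) → ℕ)
    (u : Fin k → ℝ) :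
    dirichletDensity k β u * (∏ i, (snocFun k u) i ^ l i)
      = ((∏ i, rf (β i) (l i)) / rf (∑ i, β i) (∑ i, l i)) *
          dirichletDensity k (fun i => β i + l i) u := by
  have hβl : ∀ i, 0 < β i + (l i : ℝ) := fun i => by have := hβ i; positivity
  unfold dirichletDensity
  split_ifs with h
  · obtain ⟨hu, hsu⟩ := (cond_iff u).mp h
    have hT0 : (0:ℝ) < 1 - ∑ j, u j := by linarith
    have hmono : (∏ i, (snocFun k u) i ^ l i)
        = (∏ j : Fin k, u j ^ (l j.castSucc)) * (1 - ∑ j, u j) ^ (l (Fin.last k)) := by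
      simp [snocFun, Fin.prod_univ_castSucc]
    have hprod : (∏ i : Fin k, u i ^ (β i.castSucc - 1)) * (∏ j : Fin k, u j ^ (l j.castSucc))
        = ∏ i : Fin k, u i ^ ((β i.castSucc + l i.castSucc) - 1) := by
      rw [← Finset.prod_mul_distrib]
      refine Finset.prod_congr rfl fun i _ => ?_
      rw [← Real.rpow_natCast (u i) (l i.castSucc), ← Real.rpow_add (hu i)]
      congr 1
      ring
    have hTpow : (1 - ∑ j, u j) ^ (β (Fin.last k) - 1) * (1 - ∑ j, u j) ^ (l (Fin.last k))
        = (1 - ∑ j, u j) ^ ((β (Fin.last k) + l (Fin.last k)) - 1) := by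
      rw [← Real.rpow_natCast (1 - ∑ j, u j) (l (Fin.last k)), ← Real.rpow_add hT0]
      congr 1
      ring
    have hsum : ∑ i, (β i + (l i : ℝ)) = (∑ i, β i) + ((∑ i, l i : ℕ) : ℝ) := by
      push_cast
      rw [Finset.sum_add_distrib]
    have hconst : Real.Gamma (∑ i, β i) / ∏ i, Real.Gamma (β i)
        = ((∏ i, rf (β i) (l i)) / rf (∑ i, β i) (∑ i, l i)) *
          (Real.Gamma (∑ i, (β i + (l i : ℝ))) / ∏ i, Real.Gamma (β i + (l i : ℝ))) := by
      rw [hsum, Gamma_add_nat (sum_pos' hβ)]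
      have h2 : ∏ i, Real.Gamma (β i + (l i : ℝ))
          = (∏ i, rf (β i) (l i)) * ∏ i, Real.Gamma (β i) := by
        rw [← Finset.prod_mul_distrib]
        exact Finset.prod_congr rfl fun i _ => Gamma_add_nat (hβ i) (l i)
      rw [h2]
      have p1 : 0 < ∏ i, rf (β i) (l i) := Finset.prod_pos fun i _ => rf_pos (hβ i) _
      have p2 : 0 < rf (∑ i, β i) (∑ i, l i) := rf_pos (sum_pos' hβ) _
      have p3 : 0 < ∏ i, Real.Gamma (β i) :=
        Finset.prod_pos fun i _ => Real.Gamma_pos_of_pos (hβ i)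
      have p4 : 0 < Real.Gamma (∑ i, β i) := Real.Gamma_pos_of_pos (sum_pos' hβ)
      field_simp
    rw [hmono, hconst, ← hprod, ← hTpow]
    ring
  · simp

lemma measurable_mono (k : ℕ) (l : Fin (k+1) → ℕ) :
    Measurable fun x : Fin (k+1) → ℝ => ∏ i, x i ^ l i :=
  Finset.univ.measurable_prod fun i _ => (measurable_pi_apply i).pow_const _

lemma dirichlet_moment (k : ℕ) (β : Fin (k+1) → ℝ) (hβ : ∀ i, 0 < β i) (l : Fin (k+1) → ℕ) :
    Integrable (fun x => ∏ i, x i ^ l i) (dirichlet k β) ∧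
    ∫ x, ∏ i, x i ^ l i ∂(dirichlet k β)
      = (∏ i, rf (β i) (l i)) / rf (∑ i, β i) (∑ i, l i) := by
  have hβl : ∀ i, 0 < β i + (l i : ℝ) := fun i => by have := hβ i; positivity
  have hg := measurable_mono k l
  have hf := measurable_snocFun k
  have hNN : Measurable fun u => (dirichletDensity k β u).toNNReal :=
    (measurable_dd k β).real_toNNReal
  have hd : dirichlet k β
      = ((volume : Measure (Fin k → ℝ)).withDensity fun u =>
          ENNReal.ofNNReal ((fun u => (dirichletDensity k β u).toNNReal) u)).map
            (snocFun k) := rfl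
  have hInt2 : Integrable (fun u => dirichletDensity k β u * ∏ i, (snocFun k u) i ^ l i)
      volume := by
    refine ((dd_integrable k _ hβl).const_mul
      ((∏ i, rf (β i) (l i)) / rf (∑ i, β i) (∑ i, l i))).congr (ae_of_all _ fun u => ?_)
    simp only
    rw [← dd_mul_mono k β hβ l u]
  have hIntg : Integrable (fun x => ∏ i, x i ^ l i) (dirichlet k β) := by
    rw [hd, integrable_map_measure hg.aestronglyMeasurable hf.aemeasurable,
      integrable_withDensity_iff_integrable_smul₀ hNN.aemeasurable]
    refine hInt2.congr (ae_of_all _ fun u => ?_)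
    simp only [Function.comp, smul_eq_mul, NNReal.smul_def]
    rw [Real.coe_toNNReal _ (dd_nonneg hβ u)]
  refine ⟨hIntg, ?_⟩
  rw [hd, integral_map hf.aemeasurable hg.aestronglyMeasurable,
    integral_withDensity_eq_integral_smul hNN]
  have : ∀ u : Fin k → ℝ, (dirichletDensity k β u).toNNReal •
      (∏ i, (snocFun k u) i ^ l i)
      = ((∏ i, rf (β i) (l i)) / rf (∑ i, β i) (∑ i, l i)) *
        dirichletDensity k (fun i => β i + l i) u := by
    intro u
    rw [NNReal.smul_def, smul_eq_mul, Real.coe_toNNReal _ (dd_nonneg hβ u),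
      dd_mul_mono k β hβ l u]
  rw [integral_congr_ae (ae_of_all _ this), integral_const_mul,
    dd_integral_one k _ hβl, mul_one]


lemma xiK_expand {k : ℕ} (α : Fin (k+1) → ℝ) (m : ℕ) (x : Fin (k+1) → ℝ) :
    (fun y : Fin (k+1) → ℝ => xiK α m x y)
      = fun y => ∑ l ∈ Finset.Nat.antidiagonalTuple (k+1) m,
          (((m.factorial : ℝ) / ∏ i, ((l i).factorial : ℝ)) *
            (rf (∑ i, α i) m / ∏ i, rf (α i) (l i)) * ∏ i, x i ^ l i) * ∏ i, y i ^ l i := by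
  funext y
  unfold xiK
  refine Finset.sum_congr rfl fun l _ => ?_
  have : ∏ i, (x i * y i) ^ l i = (∏ i, x i ^ l i) * ∏ i, y i ^ l i := by
    rw [← Finset.prod_mul_distrib]
    exact Finset.prod_congr rfl fun i _ => mul_pow _ _ _
  rw [this]
  ring

lemma xiK_int {k : ℕ} (α β : Fin (k+1) → ℝ) (hβ : ∀ i, 0 < β i) (m : ℕ) (x : Fin (k+1) → ℝ) :
    Integrable (fun y => xiK α m x y) (dirichlet k β) := by
  rw [xiK_expand α m x]
  exact integrable_finset_sum _ fun l _ => ((dirichlet_moment k β hβ l).1.const_mul _)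

lemma xiK_integral {k : ℕ} (α β : Fin (k+1) → ℝ) (hβ : ∀ i, 0 < β i) (m : ℕ)
    (x : Fin (k+1) → ℝ) :
    ∫ y, xiK α m x y ∂(dirichlet k β)
      = ∑ l ∈ Finset.Nat.antidiagonalTuple (k+1) m,
          (((m.factorial : ℝ) / ∏ i, ((l i).factorial : ℝ)) *
            (rf (∑ i, α i) m / ∏ i, rf (α i) (l i)) *
            ((∏ i, rf (β i) (l i)) / rf (∑ i, β i) (∑ i, l i))) * ∏ i, x i ^ l i := by
  rw [xiK_expand α m x,
    integral_finset_sum _ fun l _ => ((dirichlet_moment k β hβ l).1.const_mul _)]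
  refine Finset.sum_congr rfl fun l _ => ?_
  rw [integral_const_mul, (dirichlet_moment k β hβ l).2]
  ring

lemma poly_int {k : ℕ} (β : Fin (k+1) → ℝ) (hβ : ∀ i, 0 < β i)
    (T : Finset (Fin (k+1) → ℕ)) (c : (Fin (k+1) → ℕ) → ℝ) :
    Integrable (fun x => ∑ l ∈ T, c l * ∏ i, x i ^ l i) (dirichlet k β) :=
  integrable_finset_sum _ fun l _ => ((dirichlet_moment k β hβ l).1.const_mul _)

lemma poly_integral {k : ℕ} (β : Fin (k+1) → ℝ) (hβ : ∀ i, 0 < β i)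
    (T : Finset (Fin (k+1) → ℕ)) (c : (Fin (k+1) → ℕ) → ℝ) :
    ∫ x, ∑ l ∈ T, c l * ∏ i, x i ^ l i ∂(dirichlet k β)
      = ∑ l ∈ T, c l * ((∏ i, rf (β i) (l i)) / rf (∑ i, β i) (∑ i, l i)) := by
  rw [integral_finset_sum _ fun l _ => ((dirichlet_moment k β hβ l).1.const_mul _)]
  exact Finset.sum_congr rfl fun l _ => by
    rw [integral_const_mul, (dirichlet_moment k β hβ l).2]

lemma sum_add_cast {k : ℕ} (α : Fin (k+1) → ℝ) (r : Fin (k+1) → ℕ) {N : ℕ}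
    (hr : ∑ i, r i = N) : ∑ i, (α i + (r i : ℝ)) = (∑ i, α i) + (N : ℝ) := by
  rw [Finset.sum_add_distrib, ← Nat.cast_sum, hr]

lemma part1 {k : ℕ} (α : Fin (k+1) → ℝ) (hα : ∀ i, 0 < α i) (N : ℕ)
    (r s : Fin (k+1) → ℕ) (hr : ∑ i, r i = N) (hs : ∑ i, s i = N) (m : ℕ) :
    (∫ x, ∫ y, xiK α m x y ∂(dirichlet k fun i => α i + s i)
        ∂(dirichlet k fun i => α i + r i)) = xiH α m r s := by
  have hβr : ∀ i, 0 < α i + ((r i : ℕ) : ℝ) := fun i => by have := hα i; positivity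
  have hβs : ∀ i, 0 < α i + ((s i : ℕ) : ℝ) := fun i => by have := hα i; positivity
  have hx : (fun x => ∫ y, xiK α m x y ∂(dirichlet k fun i => α i + s i))
      = fun x => ∑ l ∈ Finset.Nat.antidiagonalTuple (k+1) m,
          (((m.factorial : ℝ) / ∏ i, ((l i).factorial : ℝ)) *
            (rf (∑ i, α i) m / ∏ i, rf (α i) (l i)) *
            ((∏ i, rf (α i + s i) (l i)) /
              rf (∑ i, (α i + (s i : ℝ))) (∑ i, l i))) * ∏ i, x i ^ l i :=
    funext fun x => xiK_integral α _ hβs m x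
  rw [hx, poly_integral _ hβr]
  unfold xiH DM
  refine Finset.sum_congr rfl fun l hl => ?_
  have hm : ∑ i, l i = m := Finset.Nat.mem_antidiagonalTuple.mp hl
  rw [hm, sum_add_cast α r hr, sum_add_cast α s hs]
  have hF : (0:ℝ) < (m.factorial : ℝ) := by positivity
  have hFl : (0:ℝ) < ∏ i, ((l i).factorial : ℝ) :=
    Finset.prod_pos fun i _ => by positivity
  have hP : (0:ℝ) < ∏ i, rf (α i) (l i) :=
    Finset.prod_pos fun i _ => rf_pos (hα i) _
  have hA : (0:ℝ) < rf (∑ i, α i) m := rf_pos (sum_pos' hα) _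
  have hQ : (0:ℝ) < rf ((∑ i, α i) + (N:ℝ)) m := by
    have := sum_pos' hα
    exact rf_pos (by positivity) _
  field_simp

/-- Hahn kernels as posterior Dirichlet mixtures of Jacobi kernels. -/
theorem stmt_3 (k : ℕ) (hk : 1 ≤ k) (α : Fin (k + 1) → ℝ) (hα : ∀ i, 0 < α i)
    (N : ℕ) (r s : Fin (k + 1) → ℕ) (hr : ∑ i, r i = N) (hs : ∑ i, s i = N) :
    (∀ m : ℕ,
      (∫ x, ∫ y, xiK α m x y ∂(dirichlet k fun i => α i + s i)
          ∂(dirichlet k fun i => α i + r i)) = xiH α m r s) ∧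
    (∀ n : ℕ, n ≤ N →
      Hker α N n r s = (rf ((∑ i, α i) + N) n / ff N n) *
        ∫ x, ∫ y, Qker α n x y ∂(dirichlet k fun i => α i + s i)
          ∂(dirichlet k fun i => α i + r i)) := by
  have hβr : ∀ i, 0 < α i + ((r i : ℕ) : ℝ) := fun i => by have := hα i; positivity
  have hβs : ∀ i, 0 < α i + ((s i : ℕ) : ℝ) := fun i => by have := hα i; positivity
  constructor
  · exact fun m => part1 α hα N r s hr hs m
  · intro n _
    unfold Hker
    congr 1
    have hQ : ∀ x, ∫ y, Qker α n x y ∂(dirichlet k fun i => α i + s i)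
        = ∑ m ∈ Finset.range (n+1), acoef (∑ i, α i) n m *
            ∫ y, xiK α m x y ∂(dirichlet k fun i => α i + s i) := by
      intro x
      unfold Qker
      rw [integral_finset_sum _ fun m _ => ((xiK_int α _ hβs m x).const_mul _)]
      exact Finset.sum_congr rfl fun m _ => integral_const_mul _ _
    have h1 : ∀ m (x : Fin (k+1) → ℝ),
        ∫ y, xiK α m x y ∂(dirichlet k fun i => α i + s i)
          = ∑ l ∈ Finset.Nat.antidiagonalTuple (k+1) m,
            (((m.factorial : ℝ) / ∏ i, ((l i).factorial : ℝ)) *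
              (rf (∑ i, α i) m / ∏ i, rf (α i) (l i)) *
              ((∏ i, rf (α i + s i) (l i)) /
                rf (∑ i, (α i + (s i : ℝ))) (∑ i, l i))) * ∏ i, x i ^ l i :=
      fun m x => xiK_integral α _ hβs m x
    calc ∑ m ∈ Finset.range (n + 1), acoef (∑ i, α i) n m * xiH α m r s
        = ∑ m ∈ Finset.range (n + 1), acoef (∑ i, α i) n m *
            ∫ x, ∫ y, xiK α m x y ∂(dirichlet k fun i => α i + s i)
              ∂(dirichlet k fun i => α i + r i) := by
          exact Finset.sum_congr rfl fun m _ => by rw [part1 α hα N r s hr hs m]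
      _ = ∫ x, ∑ m ∈ Finset.range (n + 1), acoef (∑ i, α i) n m *
            ∫ y, xiK α m x y ∂(dirichlet k fun i => α i + s i)
              ∂(dirichlet k fun i => α i + r i) := by
          rw [integral_finset_sum _ ?_]
          · exact Finset.sum_congr rfl fun m _ => by rw [integral_const_mul]
          · intro m _
            simp only [h1]
            exact (poly_int _ hβr _ _).const_mul _
      _ = ∫ x, ∫ y, Qker α n x y ∂(dirichlet k fun i => α i + s i)
            ∂(dirichlet k fun i => α i + r i) := by
          exact integral_congr_ae (ae_of_all _ fun x => (hQ x).symm)
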